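/- Under the hypotheses of the previous setup (hypersurface with induced metallic data $P, V, f$), if $J\nu$ is tangent to $M$ (i.e. $f = 0$), then $\|V\|^2 = q$, $PV = pV$, $A(V) = 0$, and the shape operator is given by $A(X) = -\frac{1}{q}\big(P(\nabla_X V) - p \nabla_X V\big)$; in particular the Gauss-Kronecker curvature vanishes identically. -/

import Mathlib

open scoped RealInnerProductSpace

/-- Hypersurface of a Riemannian metallic manifold (trivialized chart model):
if `Jν` is tangent, i.e. `f = 0`, then `‖V‖² = q`, `PV = pV`, `A V = 0`, the shape
operator is `A X = -(1/q)(P(∇_X V) - p ∇_X V)`, and the Gauss-Kronecker curvature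
`det A` vanishes identically. -/
theorem metallic_hypersurface_Jnu_tangent
    {E : Type*} [NormedAddCommGroup E] [InnerProductSpace ℝ E] [FiniteDimensional ℝ E]
    (p q : ℝ) (hp : 0 < p) (hq : 0 < q)
    (P A : E → E →L[ℝ] E) (V : E → E) (f : E → ℝ)
    (hAsym : ∀ x X Y, ⟪A x X, Y⟫ = ⟪X, A x Y⟫)
    (hPsym : ∀ x X Y, ⟪P x X, Y⟫ = ⟪X, P x Y⟫)
    (h1 : ∀ x X, P x (P x X) + ⟪V x, X⟫ • V x = p • P x X + q • X)
    (h2 : ∀ x, P x (V x) + f x • V x = p • V x)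
    (h3 : ∀ x, (f x) ^ 2 + ‖V x‖ ^ 2 = p * f x + q)
    (hnablaV : ∀ x X, fderiv ℝ V x X = -(P x (A x X)) + f x • A x X)
    (hdf : ∀ x X, fderiv ℝ f x X = -2 * ⟪A x X, V x⟫)
    (hf : ∀ x, f x = 0) :
    (∀ x, ‖V x‖ ^ 2 = q) ∧ (∀ x, P x (V x) = p • V x) ∧ (∀ x, A x (V x) = 0) ∧
      (∀ x X, A x X =
        -(1 / q) • (P x (fderiv ℝ V x X) - p • fderiv ℝ V x X)) ∧
      (∀ x, LinearMap.det ((A x : E →ₗ[ℝ] E)) = 0) := by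
  -- f is identically zero, so df = 0, so ⟪A x X, V x⟫ = 0 for all X.
  have hf0 : f = fun _ => (0 : ℝ) := funext hf
  have hdf0 : ∀ x X, fderiv ℝ f x X = 0 := by
    intro x X
    rw [hf0]
    simp
  have hAV : ∀ x X, ⟪A x X, V x⟫ = 0 := by
    intro x X
    have := hdf x X
    rw [hdf0 x X] at this
    linarith
  have hVnorm : ∀ x, ‖V x‖ ^ 2 = q := by
    intro x
    have := h3 x
    rw [hf x] at this
    simpa using this
  have hPV : ∀ x, P x (V x) = p • V x := by
    intro x
    have := h2 x
    rw [hf x] at this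
    simpa using this
  have hAVzero : ∀ x, A x (V x) = 0 := by
    intro x
    have : ∀ X : E, ⟪A x (V x), X⟫ = 0 := by
      intro X
      rw [hAsym x (V x) X, real_inner_comm]
      exact hAV x X
    exact inner_self_eq_zero.mp (this (A x (V x)))
  refine ⟨hVnorm, hPV, hAVzero, ?_, ?_⟩
  · intro x X
    have hderiv : fderiv ℝ V x X = -(P x (A x X)) := by
      rw [hnablaV x X, hf x]
      simp
    have hP2 : P x (P x (A x X)) = p • P x (A x X) + q • A x X := by
      have := h1 x (A x X)
      have hz : ⟪V x, A x X⟫ = 0 := by rw [real_inner_comm]; exact hAV x X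
      rw [hz] at this
      simpa using this
    have hqne : q ≠ 0 := ne_of_gt hq
    rw [hderiv, map_neg, hP2]
    match_scalars <;> field_simp <;> ring
  · intro x
    have hVne : V x ≠ 0 := by
      intro h
      have h2' := hVnorm x
      rw [h, norm_zero] at h2'
      nlinarith
    have := (LinearMap.hasEigenvalue_zero_tfae ((A x : E →ₗ[ℝ] E))).out 3 5
    rw [this]
    exact ⟨V x, hVne, hAVzero x⟩
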